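/- Let n ≥ 3. Every dot irreducible sawtooth dot graph over {1,…,n−1} has length at most n(n−1)² (since each of the n−1 possible values occurs at most n(n−1) times). Consequently, the set of dot irreducible sawtooth dot graphs over {1,…,n−1} is finite. -/

import Mathlib

/-- The underlying sequence of a dot graph given as a list of ascending
segments `(p, q)`: segment `(p, q)` contributes `p, p+1, …, q`. -/
def toSeq (L : List (ℕ × ℕ)) : List ℕ :=
  L.flatMap fun s => List.range' s.1 (s.2 - s.1 + 1)

/-- `L` is the list of maximal ascending segments of a sawtooth dot graph over
`{1, …, n-1}`: `1 ≤ pᵢ ≤ qᵢ ≤ n-1` for all `i`, and `p_{i+1} ≤ q_i` for all `i`. -/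
def IsSawtooth (n : ℕ) (L : List (ℕ × ℕ)) : Prop :=
  (∀ s ∈ L, 1 ≤ s.1 ∧ s.1 ≤ s.2 ∧ s.2 ≤ n - 1) ∧
  ∀ (i : ℕ) (h : i + 1 < L.length),
    (L.get ⟨i + 1, h⟩).1 ≤ (L.get ⟨i, Nat.lt_of_succ_lt h⟩).2

/-- A sawtooth dot graph (given by its segment list) is dot reducible if it
contains a horizontal line, a box, a hexagon of type 1 or 2, a double box, or
a double hexagon. -/
def DotReducible (L : List (ℕ × ℕ)) : Prop :=
  -- horizontal line
  (∃ (i : ℕ) (h : i + 1 < L.length),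
      (L.get ⟨i, Nat.lt_of_succ_lt h⟩).2 = (L.get ⟨i + 1, h⟩).1) ∨
  -- box
  (∃ i j : Fin L.length, i < j ∧
      (L.get i).1 ≤ (L.get j).1 ∧ (L.get i).2 ≤ (L.get j).2) ∨
  -- hexagon of type 1
  (∃ i j l : Fin L.length, i < j ∧ j < l ∧
      (L.get i).1 ≤ (L.get j).1 ∧ (L.get i).2 ≤ (L.get l).2 ∧
      (L.get l).1 ≤ (L.get j).2) ∨
  -- hexagon of type 2
  (∃ i j l : Fin L.length, i < j ∧ j < l ∧
      (L.get i).1 ≤ (L.get l).1 ∧ (L.get j).2 ≤ (L.get l).2 ∧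
      (L.get j).1 ≤ (L.get i).2) ∨
  -- double box
  (∃ i j l : Fin L.length, i < j ∧ j < l ∧
      (L.get i).2 ≤ (L.get j).2 ∧ (L.get j).1 ≤ (L.get l).1 ∧
      (L.get i).1 ≤ (L.get l).2 + 1) ∨
  -- double hexagon
  (∃ i j l m : Fin L.length, i < j ∧ j ≤ l ∧ l < m ∧
      (L.get i).1 ≤ (L.get j).1 ∧ (L.get l).2 ≤ (L.get m).2)

/-- The spindle at `k` over `{1, …, n-1}`: segments `(s, n-1)` for
`s = n-1` down to `k+2`, then `(1, n-1)`, then `(1, t)` for `t = k` down to `1`. -/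
def spindle (n k : ℕ) : List (ℕ × ℕ) :=
  ((List.range (n - 2 - k)).map fun i => (n - 1 - i, n - 1)) ++
    [(1, n - 1)] ++
    ((List.range k).map fun i => (1, k - i))

/-- `L` is a maximal dot irreducible sawtooth dot graph over `{1, …, n-1}`:
it is dot irreducible, and every sawtooth dot graph over `{1, …, n-1}`
containing it as a proper subsequence is dot reducible. -/
def MaxDotIrreducible (n : ℕ) (L : List (ℕ × ℕ)) : Prop :=
  IsSawtooth n L ∧ ¬ DotReducible L ∧
  ∀ M : List (ℕ × ℕ), IsSawtooth n M → List.Sublist (toSeq L) (toSeq M) →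
    toSeq L ≠ toSeq M → DotReducible M

/-- Every dot irreducible sawtooth dot graph over `{1, …, n-1}` has length at
most `n(n-1)²`; consequently there are only finitely many dot irreducible
sawtooth dot graphs over `{1, …, n-1}`. -/
lemma pigeon (n : ℕ) (hn : 1 ≤ n) (g : ℕ → ℕ)
    (hg : ∀ k < n, g k ∈ Finset.Icc 1 (n - 1)) :
    ∃ a b, a < b ∧ b < n ∧ g a ≤ g b := by
  have hcard : (Finset.Icc 1 (n-1)).card < (Finset.range n).card := by
    simp [Nat.card_Icc]; omega
  obtain ⟨a, ha, b, hb, hab, he⟩ :=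
    Finset.exists_ne_map_eq_of_card_lt_of_maps_to hcard
      (fun k hk => hg k (Finset.mem_range.mp hk))
  simp only [Finset.mem_range] at ha hb
  rcases lt_or_gt_of_ne hab with h | h
  · exact ⟨a, b, h, hb, he.le⟩
  · exact ⟨b, a, h, ha, he.ge⟩

lemma listsFinite {α : Type*} {s : Set α} (hs : s.Finite) (N : ℕ) :
    {l : List α | l.length ≤ N ∧ ∀ x ∈ l, x ∈ s}.Finite := by
  induction N with
  | zero =>
    apply Set.Finite.subset (Set.finite_singleton ([] : List α))
    rintro l ⟨hl, -⟩
    simp [List.length_eq_zero_iff.mp (Nat.le_zero.mp hl)]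
  | succ N ih =>
    apply Set.Finite.subset
      ((((hs.prod ih).image fun p : α × List α => p.1 :: p.2).insert []))
    rintro (_ | ⟨a, l⟩) ⟨hl, hmem⟩
    · simp
    · right
      refine ⟨(a, l), ⟨hmem a (by simp), ?_, ?_⟩, rfl⟩
      · simpa using Nat.succ_le_succ_iff.mp hl
      · exact fun x hx => hmem x (by simp [hx])

lemma segsLen (n : ℕ) (hn : 3 ≤ n) (L : List (ℕ × ℕ))
    (hS : IsSawtooth n L) (hI : ¬ DotReducible L) : L.length ≤ 2 * n - 2 := by
  by_contra hc
  push_neg at hc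
  set r := L.length with hr
  have hrn : 2 * n - 1 ≤ r := by omega
  have hmem : ∀ (k : ℕ) (h : k < r),
      1 ≤ (L.get ⟨k, h⟩).1 ∧ (L.get ⟨k, h⟩).1 ≤ (L.get ⟨k, h⟩).2 ∧
        (L.get ⟨k, h⟩).2 ≤ n - 1 :=
    fun k h => hS.1 _ (L.get_mem ⟨k, h⟩)
  obtain ⟨a, b, hab, hbn, hpab⟩ :=
    pigeon n (by omega) (fun k => (L.getD k (0, 0)).1) (fun k hk => by
      have hk' : k < r := by omega
      show (L.getD k (0,0)).1 ∈ _
      rw [List.getD_eq_getElem L (0,0) hk']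
      have := hmem k hk'
      simp only [List.get_eq_getElem] at this
      exact Finset.mem_Icc.mpr ⟨this.1, le_trans this.2.1 this.2.2⟩)
  obtain ⟨c, d, hcd, hdn, hqcd⟩ :=
    pigeon n (by omega) (fun k => (L.getD (r - n + k) (0, 0)).2) (fun k hk => by
      have hk' : r - n + k < r := by omega
      show (L.getD (r - n + k) (0,0)).2 ∈ _
      rw [List.getD_eq_getElem L (0,0) hk']
      have := hmem _ hk'
      simp only [List.get_eq_getElem] at this
      exact Finset.mem_Icc.mpr ⟨le_trans this.1 this.2.1, this.2.2⟩)
  have ha' : a < r := by omega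
  have hb' : b < r := by omega
  have hc' : r - n + c < r := by omega
  have hd' : r - n + d < r := by omega
  apply hI
  refine Or.inr (Or.inr (Or.inr (Or.inr (Or.inr
    ⟨⟨a, ha'⟩, ⟨b, hb'⟩, ⟨r - n + c, hc'⟩, ⟨r - n + d, hd'⟩, ?_, ?_, ?_, ?_, ?_⟩))))
  · exact hab
  · show b ≤ r - n + c; omega
  · show r - n + c < r - n + d; omega
  · simpa only [List.get_eq_getElem, List.getD_eq_getElem L (0,0) ha',
      List.getD_eq_getElem L (0,0) hb'] using hpab
  · simpa only [List.get_eq_getElem, List.getD_eq_getElem L (0,0) hc',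
      List.getD_eq_getElem L (0,0) hd'] using hqcd

lemma seqLen (n : ℕ) (hn : 3 ≤ n) (L : List (ℕ × ℕ))
    (hS : IsSawtooth n L) : (toSeq L).length ≤ L.length * (n - 1) := by
  unfold toSeq
  rw [List.length_flatMap]
  calc (L.map fun s => (List.range' s.1 (s.2 - s.1 + 1)).length).sum
      ≤ (L.map fun s => (List.range' s.1 (s.2 - s.1 + 1)).length).length * (n - 1) := by
        refine List.sum_le_card_nsmul _ _ ?_
        intro x hx
        obtain ⟨s, hs, rfl⟩ := List.mem_map.mp hx
        have := hS.1 s hs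
        simp [List.length_range']
        omega
    _ = L.length * (n - 1) := by rw [List.length_map]

theorem dot_irreducible_length_bound (n : ℕ) (hn : 3 ≤ n) :
    (∀ L : List (ℕ × ℕ), IsSawtooth n L → ¬ DotReducible L →
      (toSeq L).length ≤ n * (n - 1) ^ 2) ∧
    {L : List (ℕ × ℕ) | IsSawtooth n L ∧ ¬ DotReducible L}.Finite := by
  constructor
  · intro L hS hI
    calc (toSeq L).length ≤ L.length * (n - 1) := seqLen n hn L hS
      _ ≤ (2 * n - 2) * (n - 1) :=
          Nat.mul_le_mul_right _ (segsLen n hn L hS hI)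
      _ ≤ (n * (n - 1)) * (n - 1) := by
          refine Nat.mul_le_mul_right _ ?_
          have h2 : 2 * n - 2 = 2 * (n - 1) := by omega
          rw [h2]
          exact Nat.mul_le_mul_right _ (by omega)
      _ = n * (n - 1) ^ 2 := by ring
  · apply Set.Finite.subset
      (listsFinite (((Set.finite_Icc 1 (n-1)).prod (Set.finite_Icc 1 (n-1)))) (2 * n - 2))
    rintro L ⟨hS, hI⟩
    refine ⟨segsLen n hn L hS hI, fun s hs => ?_⟩
    have := hS.1 s hs
    exact ⟨Set.mem_Icc.mpr ⟨this.1, le_trans this.2.1 this.2.2⟩,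
      Set.mem_Icc.mpr ⟨le_trans this.1 this.2.1, this.2.2⟩⟩
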